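/- Let n be even. Then the convex hull of the set of degree-count vectors { (n_0(g), …, n_{n-1}(g)) : g a simple graph on n vertices } in R^n equals n·Δ^{n-1}, the standard (n-1)-simplex scaled by n intersected with the nonnegative orthant, i.e., the set { x ∈ R^n : x_i ≥ 0, Σ_i x_i = n }. -/

import Mathlib

/-- The degree of vertex `v` in `g`. -/
noncomputable def dkDeg {n : ℕ} (g : SimpleGraph (Fin n)) (v : Fin n) : ℕ :=
  Nat.card (g.neighborSet v)

/-- `n_k(g)`: the number of vertices of `g` of degree `k`. -/
noncomputable def dkNk {n : ℕ} (g : SimpleGraph (Fin n)) (k : ℕ) : ℕ :=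
  Nat.card {v : Fin n // dkDeg g v = k}

/-- The degree-count vector of `g`, as a point of `ℝⁿ`. -/
noncomputable def dkVec {n : ℕ} (g : SimpleGraph (Fin n)) : Fin n → ℝ :=
  fun k => (dkNk g (k : ℕ) : ℝ)

open Finset

/-- symmetric set of jump sizes in ℕ -/
def dkT (n k : ℕ) : Finset ℕ :=
  (Finset.Icc 1 (k/2) ∪ Finset.Icc (n - k/2) (n-1)) ∪ (if k % 2 = 1 then {n/2} else ∅)

lemma dkT_card {n k : ℕ} (heven : Even n) (hk : k < n) : (dkT n k).card = k := by
  have hn2 : n % 2 = 0 := Nat.even_iff.mp heven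
  have hm : 2 * (k/2) ≤ n - 2 := by omega
  rw [dkT, Finset.card_union_of_disjoint, Finset.card_union_of_disjoint]
  · simp only [Nat.card_Icc]
    split_ifs <;> simp <;> omega
  · simp only [Finset.disjoint_left, Finset.mem_Icc]
    intro a ha hb; omega
  · simp only [Finset.disjoint_left, Finset.mem_union, Finset.mem_Icc]
    intro a ha hb
    split_ifs at hb <;> simp at hb <;> omega

lemma dkT_mem {n k t : ℕ} (ht : t ∈ dkT n k) (hn : 0 < n) (heven : Even n) (hk : k < n) :
    1 ≤ t ∧ t ≤ n - 1 := by
  have hn2 : n % 2 = 0 := Nat.even_iff.mp heven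
  simp only [dkT, Finset.mem_union, Finset.mem_Icc] at ht
  split_ifs at ht with h <;> simp at ht <;> omega

lemma dkT_symm {n k t : ℕ} (ht : t ∈ dkT n k) (hn : 0 < n) (heven : Even n) (hk : k < n) :
    n - t ∈ dkT n k := by
  have hn2 : n % 2 = 0 := Nat.even_iff.mp heven
  have hm : 2 * (k/2) ≤ n - 2 := by omega
  simp only [dkT, Finset.mem_union, Finset.mem_Icc] at ht ⊢
  split_ifs at ht ⊢ with h <;> simp at ht ⊢ <;> omega

/-- jump set in `ZMod n` -/
def dkS (n k : ℕ) : Finset (ZMod n) := (dkT n k).image (Nat.cast)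

lemma dkS_card {n k : ℕ} (hn : 0 < n) (heven : Even n) (hk : k < n) :
    (dkS n k).card = k := by
  haveI : NeZero n := ⟨hn.ne'⟩
  rw [dkS, Finset.card_image_of_injOn, dkT_card heven hk]
  intro a ha b hb hab
  have ha' := dkT_mem ha hn heven hk
  have hb' := dkT_mem hb hn heven hk
  have : (a : ZMod n).val = (b : ZMod n).val := by rw [hab]
  rwa [ZMod.val_natCast_of_lt (by omega), ZMod.val_natCast_of_lt (by omega)] at this

lemma dkS_ne_zero {n k : ℕ} (hn : 0 < n) (heven : Even n) (hk : k < n) :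
    (0 : ZMod n) ∉ dkS n k := by
  haveI : NeZero n := ⟨hn.ne'⟩
  simp only [dkS, Finset.mem_image]
  rintro ⟨t, ht, h0⟩
  have ht' := dkT_mem ht hn heven hk
  have : (t : ZMod n).val = (0 : ZMod n).val := by rw [h0]
  rw [ZMod.val_natCast_of_lt (by omega), ZMod.val_zero] at this
  omega

lemma dkS_neg {n k : ℕ} (hn : 0 < n) (heven : Even n) (hk : k < n) {x : ZMod n}
    (hx : x ∈ dkS n k) : -x ∈ dkS n k := by
  simp only [dkS, Finset.mem_image] at hx ⊢
  obtain ⟨t, ht, rfl⟩ := hx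
  refine ⟨n - t, dkT_symm ht hn heven hk, ?_⟩
  have ht' := dkT_mem ht hn heven hk
  have : ((n - t : ℕ) : ZMod n) + (t : ZMod n) = 0 := by
    rw [← Nat.cast_add]
    have : n - t + t = n := by omega
    rw [this, ZMod.natCast_self]
  linear_combination this

/-- the `k`-regular circulant-like graph on `ZMod n` -/
def dkG (n k : ℕ) (hn : 0 < n) (heven : Even n) (hk : k < n) : SimpleGraph (ZMod n) where
  Adj a b := a ≠ b ∧ b - a ∈ dkS n k
  symm := by
    constructor
    rintro a b ⟨hab, hs⟩
    refine ⟨hab.symm, ?_⟩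
    have := dkS_neg hn heven hk hs
    simpa using this
  loopless := by constructor; rintro a ⟨h, -⟩; exact h rfl

lemma dkG_deg (n k : ℕ) (hn : 0 < n) (heven : Even n) (hk : k < n) (a : ZMod n) :
    Nat.card ((dkG n k hn heven hk).neighborSet a) = k := by
  have himg : (dkG n k hn heven hk).neighborSet a = (fun s => a + s) '' ↑(dkS n k) := by
    ext b
    simp only [SimpleGraph.mem_neighborSet, dkG, Set.mem_image, Finset.mem_coe]
    constructor
    · rintro ⟨hab, hs⟩
      exact ⟨b - a, hs, by ring⟩
    · rintro ⟨s, hs, rfl⟩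
      refine ⟨?_, by simpa using hs⟩
      intro h
      have : s = 0 := by linear_combination -h
      exact dkS_ne_zero hn heven hk (this ▸ hs)
  rw [himg, Nat.card_image_of_injective (add_right_injective a),
    Nat.card_coe_set_eq, Set.ncard_coe_finset]
  exact dkS_card hn heven hk

lemma dk_exists_regular (n k : ℕ) (hn : 0 < n) (heven : Even n) (hk : k < n) :
    ∃ g : SimpleGraph (Fin n), ∀ v, dkDeg g v = k := by
  haveI : NeZero n := ⟨hn.ne'⟩
  let e : Fin n ≃ ZMod n := (Fintype.equivFinOfCardEq (ZMod.card n)).symm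
  refine ⟨(dkG n k hn heven hk).comap e, fun v => ?_⟩
  have hpre : ((dkG n k hn heven hk).comap e).neighborSet v
      = e ⁻¹' ((dkG n k hn heven hk).neighborSet (e v)) := by
    ext w; simp [SimpleGraph.comap]
  have hpre2 : e ⁻¹' ((dkG n k hn heven hk).neighborSet (e v))
      = e.symm '' ((dkG n k hn heven hk).neighborSet (e v)) := by
    ext w
    simp only [Set.mem_preimage, Set.mem_image]
    constructor
    · intro h; exact ⟨e w, h, by simp⟩
    · rintro ⟨x, hx, rfl⟩; simpa using hx
  rw [dkDeg, hpre, hpre2, Nat.card_image_of_injective e.symm.injective]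
  exact dkG_deg n k hn heven hk (e v)

lemma dkVec_regular {n k : ℕ} (hn : 0 < n) (g : SimpleGraph (Fin n))
    (hg : ∀ v, dkDeg g v = k) (i : Fin n) :
    dkVec g i = if (i : ℕ) = k then (n : ℝ) else 0 := by
  rw [dkVec, dkNk]
  split_ifs with h
  · have : {v : Fin n // dkDeg g v = (i : ℕ)} ≃ Fin n :=
      Equiv.subtypeUnivEquiv (fun v => by rw [hg v, h])
    rw [Nat.card_congr this, Nat.card_eq_fintype_card, Fintype.card_fin]
  · haveI : IsEmpty {v : Fin n // dkDeg g v = (i : ℕ)} :=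
      ⟨fun ⟨v, hv⟩ => h (by rw [← hv, hg v])⟩
    rw [Nat.card_of_isEmpty, Nat.cast_zero]

lemma dkDeg_lt {n : ℕ} (hn : 0 < n) (g : SimpleGraph (Fin n)) (v : Fin n) :
    dkDeg g v < n := by
  classical
  rw [dkDeg, Nat.card_eq_fintype_card]
  have : Fintype.card {w : Fin n // w ∈ g.neighborSet v} < Fintype.card (Fin n) :=
    Fintype.card_subtype_lt (x := v) (by simp)
  simpa [Fintype.card_subtype] using this

lemma dk_sum {n : ℕ} (hn : 0 < n) (g : SimpleGraph (Fin n)) :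
    ∑ k : Fin n, dkNk g (k : ℕ) = n := by
  classical
  have hf : ∀ v ∈ (Finset.univ : Finset (Fin n)),
      (⟨dkDeg g v, dkDeg_lt hn g v⟩ : Fin n) ∈ (Finset.univ : Finset (Fin n)) :=
    fun _ _ => Finset.mem_univ _
  have h := Finset.card_eq_sum_card_fiberwise hf
  rw [Finset.card_univ, Fintype.card_fin] at h
  refine Eq.trans (Finset.sum_congr rfl fun k _ => ?_) h.symm
  rw [dkNk, Nat.card_eq_fintype_card, Fintype.card_subtype]
  congr 1
  apply Finset.filter_congr
  intro v _
  simp [Fin.ext_iff]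

/-- for `n` even, the convex hull of the degree-count vectors of
simple graphs on `n` vertices is the scaled simplex `n·Δ^{n-1}`. -/
theorem stmt10 (n : ℕ) (hn : 0 < n) (heven : Even n) :
    convexHull ℝ {x : Fin n → ℝ | ∃ g : SimpleGraph (Fin n), x = dkVec g}
      = {x : Fin n → ℝ | (∀ i, 0 ≤ x i) ∧ ∑ i, x i = n} := by
  have hn0 : (n : ℝ) ≠ 0 := Nat.cast_ne_zero.mpr hn.ne'
  apply Set.Subset.antisymm
  · apply convexHull_min
    · rintro x ⟨g, rfl⟩
      refine ⟨fun i => Nat.cast_nonneg _, ?_⟩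
      have h := dk_sum hn g
      calc ∑ i, dkVec g i = ((∑ k : Fin n, dkNk g (k : ℕ) : ℕ) : ℝ) := by
            push_cast [dkVec]; rfl
        _ = n := by rw [h]
    · rintro x ⟨hx0, hxs⟩ y ⟨hy0, hys⟩ a b ha hb hab
      refine ⟨fun i => add_nonneg (mul_nonneg ha (hx0 i)) (mul_nonneg hb (hy0 i)), ?_⟩
      simp only [Pi.add_apply, Pi.smul_apply, smul_eq_mul]
      rw [Finset.sum_add_distrib, ← Finset.mul_sum, ← Finset.mul_sum, hxs, hys]
      ring_nf
      linear_combination (n : ℝ) * hab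
  · rintro x ⟨hx0, hxs⟩
    choose g hg using fun k : Fin n => dk_exists_regular n k hn heven k.isLt
    have hx : x = ∑ k : Fin n, (x k / n) • dkVec (g k) := by
      funext i
      rw [Finset.sum_apply]
      have : ∀ k : Fin n, ((x k / n) • dkVec (g k)) i
          = if k = i then x k / n * n else 0 := by
        intro k
        rw [Pi.smul_apply, smul_eq_mul, dkVec_regular hn (g k) (hg k)]
        by_cases h : k = i
        · simp [h]
        · rw [if_neg (fun hh => h (Fin.ext hh.symm)), if_neg h, mul_zero]
      rw [Finset.sum_congr rfl fun k _ => this k, Finset.sum_ite_eq', if_pos (Finset.mem_univ i),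
        div_mul_cancel₀ _ hn0]
    rw [hx]
    apply Convex.sum_mem (convex_convexHull ℝ _)
    · intro k _
      exact div_nonneg (hx0 k) (Nat.cast_nonneg n)
    · rw [← Finset.sum_div, hxs, div_self hn0]
    · intro k _
      exact subset_convexHull ℝ _ ⟨g k, rfl⟩
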